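/- Let Φ = [[Φ₁₁, Φ₁₂],[Φ₁₂ᵀ, Φ₂₂]] ∈ ℝ^{(m_w+N)×(m_w+N)} be symmetric with Φ₁₁ ∈ ℝ^{m_w×m_w} and Φ₂₂ ≺ 0. Then the set {W ∈ ℝ^{m_w×N} : Φ₁₁ + Φ₁₂Wᵀ + WΦ₁₂ᵀ + WΦ₂₂Wᵀ ⪰ 0} is a bounded subset of ℝ^{m_w×N} (e.g., bounded in Frobenius norm). -/

import Mathlib

open Matrix

/-- A positive definite real matrix's quadratic form dominates a positive multiple of the
squared Euclidean norm. -/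
lemma posDef_quad_lower_bound {N : ℕ} {A : Matrix (Fin N) (Fin N) ℝ} (hA : A.PosDef) :
    ∃ c > 0, ∀ x : Fin N → ℝ, c * (∑ j, x j ^ 2) ≤ x ⬝ᵥ A *ᵥ x := by
  rcases Nat.eq_zero_or_pos N with hN | hN
  · refine ⟨1, one_pos, fun x => ?_⟩
    subst hN
    simp [dotProduct]
  · -- minimize over the unit sphere
    have hne : (Metric.sphere (0 : EuclideanSpace ℝ (Fin N)) 1).Nonempty := by
      have : Nontrivial (EuclideanSpace ℝ (Fin N)) := by
        haveI : Nonempty (Fin N) := ⟨⟨0, hN⟩⟩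
        infer_instance
      exact NormedSpace.sphere_nonempty.mpr zero_le_one
    have hcont : Continuous fun x : EuclideanSpace ℝ (Fin N) =>
        (x : Fin N → ℝ) ⬝ᵥ A *ᵥ (x : Fin N → ℝ) := by
      simp only [dotProduct, mulVec, dotProduct]
      fun_prop
    obtain ⟨u, hu, hmin⟩ := (isCompact_sphere (0 : EuclideanSpace ℝ (Fin N)) 1).exists_isMinOn
      hne hcont.continuousOn
    have hu1 : ‖u‖ = 1 := by simpa using hu
    have hu0 : (u : Fin N → ℝ) ≠ 0 := by
      intro h
      have : u = 0 := (WithLp.ofLp_eq_zero 2).mp h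
      rw [this] at hu1; simp at hu1
    have hcpos : (0 : ℝ) < (u : Fin N → ℝ) ⬝ᵥ A *ᵥ (u : Fin N → ℝ) := by
      have := hA.dotProduct_mulVec_pos hu0
      simpa using this
    refine ⟨_, hcpos, fun x => ?_⟩
    rcases eq_or_ne x 0 with rfl | hx
    · simp
    · set t : ℝ := Real.sqrt (∑ j, x j ^ 2) with ht
      have hs : (0:ℝ) < ∑ j, x j ^ 2 := by
        obtain ⟨j, hj⟩ := Function.ne_iff.mp hx
        exact Finset.sum_pos' (fun j _ => sq_nonneg _) ⟨j, Finset.mem_univ _, sq_pos_of_ne_zero hj⟩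
      have htpos : 0 < t := Real.sqrt_pos.mpr hs
      have ht2 : t ^ 2 = ∑ j, x j ^ 2 := Real.sq_sqrt hs.le
      set v : EuclideanSpace ℝ (Fin N) := WithLp.toLp 2 (t⁻¹ • x : Fin N → ℝ) with hv
      have hvnorm : ‖v‖ = 1 := by
        rw [EuclideanSpace.norm_eq]
        simp_rw [Real.norm_eq_abs, sq_abs]
        have : ∀ j, (v j) ^ 2 = t⁻¹ ^ 2 * x j ^ 2 := by
          intro j; simp [hv, mul_pow]
        rw [Finset.sum_congr rfl fun j _ => this j, ← Finset.mul_sum, ← ht2]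
        have : t⁻¹ ^ 2 * t ^ 2 = 1 := by
          field_simp
        rw [this, Real.sqrt_one]
      have hvs : v ∈ Metric.sphere (0 : EuclideanSpace ℝ (Fin N)) 1 := by
        simpa using hvnorm
      have : (u : Fin N → ℝ) ⬝ᵥ A *ᵥ (u : Fin N → ℝ)
          ≤ (v : Fin N → ℝ) ⬝ᵥ A *ᵥ (v : Fin N → ℝ) := hmin hvs
      have hquad : (v : Fin N → ℝ) ⬝ᵥ A *ᵥ (v : Fin N → ℝ)
          = t⁻¹ * t⁻¹ * (x ⬝ᵥ A *ᵥ x) := by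
        show (t⁻¹ • x) ⬝ᵥ A *ᵥ (t⁻¹ • x) = _
        rw [mulVec_smul, smul_dotProduct, dotProduct_smul]
        simp [smul_eq_mul]; ring
      rw [hquad] at this
      calc ((u : Fin N → ℝ) ⬝ᵥ A *ᵥ (u : Fin N → ℝ)) * ∑ j, x j ^ 2
          = ((u : Fin N → ℝ) ⬝ᵥ A *ᵥ (u : Fin N → ℝ)) * t ^ 2 := by rw [ht2]
        _ ≤ (t⁻¹ * t⁻¹ * (x ⬝ᵥ A *ᵥ x)) * t ^ 2 := by
            apply mul_le_mul_of_nonneg_right this (by positivity)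
        _ = (t⁻¹ * t) * (t⁻¹ * t) * (x ⬝ᵥ A *ᵥ x) := by ring
        _ = x ⬝ᵥ A *ᵥ x := by rw [inv_mul_cancel₀ (ne_of_gt htpos)]; ring

/-- If `Φ` is symmetric with `Φ₂₂ ≺ 0`, then the set of matrices `W` satisfying the quadratic
matrix inequality `Φ₁₁ + Φ₁₂Wᵀ + WΦ₁₂ᵀ + WΦ₂₂Wᵀ ⪰ 0` is bounded (in Frobenius norm). -/
theorem disturbance_set_bounded (mw N : ℕ)
    (Φ11 : Matrix (Fin mw) (Fin mw) ℝ) (Φ12 : Matrix (Fin mw) (Fin N) ℝ)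
    (Φ22 : Matrix (Fin N) (Fin N) ℝ)
    (hΦ11 : Φ11.IsSymm) (hΦ22 : (-Φ22).PosDef) :
    ∃ c : ℝ, ∀ W : Matrix (Fin mw) (Fin N) ℝ,
      (Φ11 + Φ12 * Wᵀ + W * Φ12ᵀ + W * Φ22 * Wᵀ).PosSemidef →
      Real.sqrt (∑ i, ∑ j, (W i j) ^ 2) ≤ c := by
  obtain ⟨c, hc, hlow⟩ := posDef_quad_lower_bound hΦ22
  set b : Fin mw → ℝ := fun i => Real.sqrt (∑ j, Φ12 i j ^ 2) with hb
  refine ⟨Real.sqrt (∑ i, (2 * Φ11 i i * c + 4 * b i ^ 2) / c ^ 2), fun W hW => ?_⟩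
  apply Real.sqrt_le_sqrt
  apply Finset.sum_le_sum
  intro i _
  -- diagonal entry nonneg
  set w : Fin N → ℝ := W i with hw
  have hdiag : 0 ≤ (Φ11 + Φ12 * Wᵀ + W * Φ12ᵀ + W * Φ22 * Wᵀ) i i := by
    have := hW.dotProduct_mulVec_nonneg (Pi.single i 1)
    simpa [dotProduct_single, mulVec_single] using this
  have hexp : (Φ11 + Φ12 * Wᵀ + W * Φ12ᵀ + W * Φ22 * Wᵀ) i i
      = Φ11 i i + 2 * (∑ j, Φ12 i j * w j) + w ⬝ᵥ Φ22 *ᵥ w := by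
    simp only [Matrix.add_apply, Matrix.mul_apply, transpose_apply, dotProduct, mulVec,
      dotProduct, hw]
    have hBA : ∑ x, W i x * Φ12 i x = ∑ x, Φ12 i x * W i x :=
      Finset.sum_congr rfl fun x _ => mul_comm _ _
    have hCD : ∑ x, (∑ j, W i j * Φ22 j x) * W i x
        = ∑ j, W i j * ∑ x, Φ22 j x * W i x := by
      simp_rw [Finset.sum_mul, Finset.mul_sum]
      rw [Finset.sum_comm]
      exact Finset.sum_congr rfl fun j _ => Finset.sum_congr rfl fun x _ => by ring
    rw [hBA, hCD]
    ring
  have hneg : w ⬝ᵥ Φ22 *ᵥ w = -(w ⬝ᵥ (-Φ22) *ᵥ w) := by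
    simp [dotProduct, mulVec, dotProduct, Finset.mul_sum, Finset.sum_neg_distrib]
  set s : ℝ := ∑ j, w j ^ 2 with hs
  have hsnn : 0 ≤ s := Finset.sum_nonneg fun j _ => sq_nonneg _
  set t : ℝ := Real.sqrt s with htdef
  have ht2 : t ^ 2 = s := Real.sq_sqrt hsnn
  have htnn : 0 ≤ t := Real.sqrt_nonneg _
  have hbnn : 0 ≤ b i := Real.sqrt_nonneg _
  have hCS : ∑ j, Φ12 i j * w j ≤ b i * t := by
    simpa [hb, hs] using Real.sum_mul_le_sqrt_mul_sqrt Finset.univ (fun j => Φ12 i j) w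
  have hlow' : c * s ≤ w ⬝ᵥ (-Φ22) *ᵥ w := hlow w
  have key : c * s ≤ Φ11 i i + 2 * (b i * t) := by
    have h1 : 0 ≤ Φ11 i i + 2 * (∑ j, Φ12 i j * w j) + w ⬝ᵥ Φ22 *ᵥ w := by
      rw [← hexp]; exact hdiag
    rw [hneg] at h1
    nlinarith [hCS]
  -- derive s ≤ (2 * Φ11 i i * c + 4 * b i ^ 2) / c ^ 2
  rw [le_div_iff₀ (by positivity : (0:ℝ) < c ^ 2)]
  nlinarith [sq_nonneg (c * t - 2 * b i), key, ht2, hc, htnn]
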